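/- Let n ≥ 2 and let τ be a real number with 0 ≤ τ < 1/(n−1). Then every vector of Ω_n(τ) is nonresonant: if ω ∈ ℝⁿ and there is C > 0 with ‖Tω‖_ℤ ≥ C·T^{-(1+τ)/n} for every positive integer T, then there is no nonzero k ∈ ℤⁿ with ⟨k,ω⟩ ∈ ℤ. -/

import Mathlib

open Finset

/-- Sup norm on `ℝⁿ`. -/
noncomputable def supNorm {n : ℕ} (x : Fin n → ℝ) : ℝ := ⨆ i, |x i|

/-- Sup-norm distance from `x ∈ ℝⁿ` to the lattice `ℤⁿ`. -/
noncomputable def distZ {n : ℕ} (x : Fin n → ℝ) : ℝ :=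
  sInf {r : ℝ | ∃ k : Fin n → ℤ, r = supNorm (fun i => x i - k i)}

/-- Distance from a real number to `ℤ`. -/
noncomputable def distZ1 (t : ℝ) : ℝ := sInf {r : ℝ | ∃ m : ℤ, r = |t - m|}

/-- `ω ∈ ℚⁿ`. -/
def IsRationalVec {n : ℕ} (ω : Fin n → ℝ) : Prop := ∀ i, ∃ q : ℚ, (q : ℝ) = ω i

/-- `ω` is resonant: some nonzero integer vector `k` has `⟨k, ω⟩ ∈ ℤ`. -/
def Resonant {n : ℕ} (ω : Fin n → ℝ) : Prop :=
  ∃ k : Fin n → ℤ, k ≠ 0 ∧ ∃ m : ℤ, ∑ i, (k i : ℝ) * ω i = (m : ℝ)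

/-- The sequence of periods of `ω`. -/
noncomputable def periods {n : ℕ} (ω : Fin n → ℝ) : ℕ → ℕ
  | 0 => 1
  | i + 1 => sInf {T : ℕ | 1 ≤ T ∧
      distZ (fun j => (T : ℝ) * ω j) < distZ (fun j => (periods ω i : ℝ) * ω j)}

/-- The resonance module of `ω`, as a subgroup of `ℤⁿ`. -/
def resModule {n : ℕ} (ω : Fin n → ℝ) : AddSubgroup (Fin n → ℤ) where
  carrier := {k | ∃ m : ℤ, ∑ i, (k i : ℝ) * ω i = (m : ℝ)}
  zero_mem' := ⟨0, by simp⟩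
  add_mem' := by
    rintro a b ⟨ma, ha⟩ ⟨mb, hb⟩
    refine ⟨ma + mb, ?_⟩
    push_cast
    simp only [Pi.add_apply, Int.cast_add, add_mul, Finset.sum_add_distrib, ha, hb]
  neg_mem' := by
    rintro a ⟨m, hm⟩
    refine ⟨-m, ?_⟩
    push_cast
    simp [neg_mul, Finset.sum_neg_distrib, hm]
lemma supNorm_nonneg' {n : ℕ} (x : Fin n → ℝ) : 0 ≤ supNorm x :=
  Real.iSup_nonneg fun _ => abs_nonneg _

lemma supNorm_le' {n : ℕ} [Nonempty (Fin n)] {x : Fin n → ℝ} {B : ℝ}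
    (h : ∀ i, |x i| ≤ B) : supNorm x ≤ B := ciSup_le h

lemma distZ_le' {n : ℕ} (x : Fin n → ℝ) (k : Fin n → ℤ) :
    distZ x ≤ supNorm (fun i => x i - k i) :=
  csInf_le ⟨0, by rintro r ⟨k', rfl⟩; exact supNorm_nonneg' _⟩ ⟨k, rfl⟩

lemma dirichlet_aux {ι : Type*} [Fintype ι] (α : ι → ℝ) (Q : ℕ) (hQ : 1 ≤ Q)
    {N : ℕ} (t₁ t₂ : Fin (N + 1)) (hlt : t₁ < t₂)
    (hf : ∀ i, ⌊(Q:ℝ) * Int.fract ((t₁:ℝ) * α i)⌋ = ⌊(Q:ℝ) * Int.fract ((t₂:ℝ) * α i)⌋) :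
    ∃ T : ℕ, 1 ≤ T ∧ T ≤ N ∧ ∀ i, ∃ p : ℤ, |(T:ℝ) * α i - p| ≤ 1 / Q := by
  refine ⟨t₂.val - t₁.val, by omega, by omega, fun i => ?_⟩
  have hQ0 : (0:ℝ) < Q := by exact_mod_cast hQ
  set x := (t₁:ℝ) * α i with hx
  set y := (t₂:ℝ) * α i with hy
  have hfr : |Int.fract y - Int.fract x| ≤ 1 / Q := by
    have h1 : |(Q:ℝ) * Int.fract y - (Q:ℝ) * Int.fract x| < 1 := by
      have e := hf i
      have a1 : (⌊(Q:ℝ) * Int.fract x⌋ : ℝ) ≤ (Q:ℝ) * Int.fract x := Int.floor_le _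
      have a2 : (Q:ℝ) * Int.fract x < ⌊(Q:ℝ) * Int.fract x⌋ + 1 := Int.lt_floor_add_one _
      have b1 : (⌊(Q:ℝ) * Int.fract y⌋ : ℝ) ≤ (Q:ℝ) * Int.fract y := Int.floor_le _
      have b2 : (Q:ℝ) * Int.fract y < ⌊(Q:ℝ) * Int.fract y⌋ + 1 := Int.lt_floor_add_one _
      rw [abs_sub_lt_iff]
      constructor <;> [skip; skip] <;> rw [e] at a1 a2 <;> linarith
    rw [← mul_sub, abs_mul, abs_of_pos hQ0] at h1
    rw [le_div_iff₀ hQ0]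
    nlinarith [abs_nonneg (Int.fract y - Int.fract x)]
  refine ⟨⌊y⌋ - ⌊x⌋, ?_⟩
  have hcast : ((t₂.val - t₁.val : ℕ) : ℝ) = (t₂:ℝ) - (t₁:ℝ) := by
    have h : t₁.val ≤ t₂.val := le_of_lt hlt
    push_cast [Nat.cast_sub h]
    rfl
  have heq : ((t₂.val - t₁.val : ℕ) : ℝ) * α i - ((⌊y⌋ - ⌊x⌋ : ℤ) : ℝ)
      = Int.fract y - Int.fract x := by
    rw [hcast, sub_mul]
    simp only [Int.fract, Int.cast_sub]
    ring
  rw [heq]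
  exact hfr

lemma dirichlet {ι : Type*} [Fintype ι] [DecidableEq ι] (α : ι → ℝ) (Q : ℕ) (hQ : 1 ≤ Q) :
    ∃ T : ℕ, 1 ≤ T ∧ T ≤ Q ^ (Fintype.card ι) ∧ ∀ i, ∃ p : ℤ, |(T:ℝ) * α i - p| ≤ 1 / Q := by
  set N := Q ^ Fintype.card ι with hN
  have hQ0 : (0:ℝ) < Q := by exact_mod_cast hQ
  have hbound : ∀ (t : Fin (N+1)) (i : ι), (⌊(Q:ℝ) * Int.fract ((t:ℝ) * α i)⌋).toNat < Q := by
    intro t i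
    rw [Int.toNat_lt' (by omega)]
    refine Int.floor_lt.2 ?_
    calc (Q:ℝ) * Int.fract ((t:ℝ) * α i) < Q * 1 :=
          mul_lt_mul_of_pos_left (Int.fract_lt_one _) hQ0
      _ = ((Q:ℤ):ℝ) := by push_cast; ring
  have hcard : Fintype.card (ι → Fin Q) < Fintype.card (Fin (N + 1)) := by
    rw [Fintype.card_fun, Fintype.card_fin, Fintype.card_fin]
    omega
  obtain ⟨t₁, t₂, hne, hfe⟩ := Fintype.exists_ne_map_eq_of_card_lt
    (fun (t : Fin (N+1)) (i : ι) => (⟨_, hbound t i⟩ : Fin Q)) hcard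
  have key : ∀ i, (⌊(Q:ℝ) * Int.fract ((t₁:ℝ) * α i)⌋).toNat
      = (⌊(Q:ℝ) * Int.fract ((t₂:ℝ) * α i)⌋).toNat :=
    fun i => congrArg Fin.val (congrFun hfe i)
  have key2 : ∀ i, ⌊(Q:ℝ) * Int.fract ((t₁:ℝ) * α i)⌋ = ⌊(Q:ℝ) * Int.fract ((t₂:ℝ) * α i)⌋ := by
    intro i
    have na : 0 ≤ ⌊(Q:ℝ) * Int.fract ((t₁:ℝ) * α i)⌋ :=
      Int.floor_nonneg.2 (mul_nonneg hQ0.le (Int.fract_nonneg _))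
    have nb : 0 ≤ ⌊(Q:ℝ) * Int.fract ((t₂:ℝ) * α i)⌋ :=
      Int.floor_nonneg.2 (mul_nonneg hQ0.le (Int.fract_nonneg _))
    have := key i
    omega
  rcases lt_or_gt_of_ne hne with h | h
  · exact dirichlet_aux α Q hQ t₁ t₂ h key2
  · exact dirichlet_aux α Q hQ t₂ t₁ h (fun i => (key2 i).symm)


/-- for `0 ≤ τ < 1/(n-1)`, the vectors of `Ω_n(τ)` are nonresonant. -/
theorem stmt14 {n : ℕ} (hn : 2 ≤ n) (τ : ℝ) (hτ0 : 0 ≤ τ) (hτ1 : τ < 1 / ((n : ℝ) - 1))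
    (ω : Fin n → ℝ) (C : ℝ) (hC : 0 < C)
    (hΩ : ∀ T : ℕ, 1 ≤ T →
      distZ (fun j => (T : ℝ) * ω j) ≥ C * (T : ℝ) ^ (-(1 + τ) / (n : ℝ))) :
    ¬ Resonant ω := by
  rintro ⟨k, hk0, m, hm⟩
  have hnem : Nonempty (Fin n) := ⟨⟨0, by omega⟩⟩
  obtain ⟨i₀, hi₀⟩ : ∃ i, k i ≠ 0 := by
    by_contra h; push_neg at h; exact hk0 (funext h)
  set b : ℤ := k i₀ with hb
  have hnR : (2:ℝ) ≤ (n:ℝ) := by exact_mod_cast hn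
  have hn1 : (0:ℝ) < (n:ℝ) - 1 := by linarith
  have hnpos : (0:ℝ) < (n:ℝ) := by linarith
  set s : ℝ := (1+τ)/(n:ℝ) with hs
  have hs0 : 0 ≤ s := div_nonneg (by linarith) hnpos.le
  have hταn : τ * ((n:ℝ)-1) < 1 := (lt_div_iff₀ hn1).1 hτ1
  have he : 0 < 1 - ((n:ℝ)-1)*s := by
    have h1 : ((n:ℝ)-1)*(1+τ) < n := by nlinarith
    have h2 : ((n:ℝ)-1)*s = (((n:ℝ)-1)*(1+τ))/(n:ℝ) := by rw [hs]; ring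
    have h3 : (((n:ℝ)-1)*(1+τ))/(n:ℝ) < 1 := (div_lt_one hnpos).2 h1
    linarith
  set e : ℝ := 1 - ((n:ℝ)-1)*s with hedef
  set K : ℝ := ∑ i, |(k i : ℝ)| with hK
  have hbR : ((b:ℝ)) ≠ 0 := Int.cast_ne_zero.2 hi₀
  have hbabs : (1:ℝ) ≤ |(b:ℝ)| := by
    have h1 : 1 ≤ |b| := Int.one_le_abs hi₀
    calc (1:ℝ) = ((1:ℤ):ℝ) := by norm_num
      _ ≤ ((|b|:ℤ):ℝ) := by exact_mod_cast h1
      _ = |(b:ℝ)| := by push_cast; ring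
  have hbK : |(b:ℝ)| ≤ K :=
    Finset.single_le_sum (fun i _ => abs_nonneg ((k i : ℝ))) (mem_univ i₀)
  have hK1 : (1:ℝ) ≤ K := le_trans hbabs hbK
  have hb2pos : (0:ℝ) < (b:ℝ)^2 := by positivity
  set c1 : ℝ := C * ((b:ℝ)^2) ^ (-s) with hc1def
  have hc1 : 0 < c1 := mul_pos hC (Real.rpow_pos_of_pos hb2pos _)
  have htend : Filter.Tendsto (fun Q : ℕ => c1 * (Q:ℝ)^e) Filter.atTop Filter.atTop :=
    Filter.Tendsto.const_mul_atTop hc1 ((tendsto_rpow_atTop he).comp tendsto_natCast_atTop_atTop)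
  obtain ⟨Q, hQK, hQ1⟩ := ((htend.eventually_gt_atTop K).and (Filter.eventually_ge_atTop 1)).exists
  have hQR : (0:ℝ) < Q := by exact_mod_cast hQ1
  have hcard : Fintype.card {i : Fin n // i ≠ i₀} = n - 1 := by
    have h1 : Fintype.card {i : Fin n // ¬ (i = i₀)} = n - 1 := by
      rw [Fintype.card_subtype_compl, Fintype.card_subtype_eq, Fintype.card_fin]
    exact h1
  obtain ⟨T, hT1, hTle, hp⟩ :=
    dirichlet (fun i : {i : Fin n // i ≠ i₀} => (b:ℝ) * ω i.val) Q hQ1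
  rw [hcard] at hTle
  choose p hpp using hp
  set a : ℕ := b.natAbs with ha
  have ha1 : 1 ≤ a := Int.natAbs_pos.2 hi₀
  set T' : ℕ := T * a^2 with hT'def
  have hT'1 : 1 ≤ T' := by
    have := Nat.mul_le_mul hT1 (Nat.pow_le_pow_left ha1 2)
    simpa using this
  have hacast : ((a:ℕ):ℝ) = |(b:ℝ)| := by
    rw [ha, Nat.cast_natAbs, Int.cast_abs]
  have hT'cast : ((T':ℕ):ℝ) = (T:ℝ) * (b:ℝ)^2 := by
    rw [hT'def]
    push_cast
    rw [hacast, sq_abs]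
  have hsum : ∑ i ∈ univ.erase i₀, (k i:ℝ) * ω i
      = ∑ j : {i : Fin n // i ≠ i₀}, (k j.val:ℝ) * ω j.val :=
    Finset.sum_subtype _ (by simp) _
  have hsplit : (b:ℝ) * ω i₀ = (m:ℝ) - ∑ j : {i : Fin n // i ≠ i₀}, (k j.val:ℝ) * ω j.val := by
    have h1 := Finset.add_sum_erase univ (fun i => (k i:ℝ) * ω i) (mem_univ i₀)
    rw [hsum] at h1
    rw [hm] at h1
    rw [← hb] at h1
    linarith
  set P : Fin n → ℤ := fun i =>
    if h : i = i₀ then (T:ℤ) * b * m - ∑ j : {i : Fin n // i ≠ i₀}, k j.val * p j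
    else b * p ⟨i, h⟩ with hP
  have hcoord : ∀ i, |(T':ℝ) * ω i - (P i : ℝ)| ≤ K / Q := by
    intro i
    by_cases h : i = i₀
    · subst h
      have hPi : ((P i : ℤ) : ℝ)
          = (T:ℝ)*(b:ℝ)*(m:ℝ) - ∑ j : {j : Fin n // j ≠ i}, (k j.val:ℝ) * (p j:ℝ) := by
        rw [hP]
        simp only [dif_pos rfl]
        push_cast
        ring
      have hsum2 : ∑ j : {j : Fin n // j ≠ i}, (k j.val:ℝ) * ((p j:ℝ) - (T:ℝ)*((b:ℝ)*ω j.val))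
          = (∑ j : {j : Fin n // j ≠ i}, (k j.val:ℝ)*(p j:ℝ))
            - (T:ℝ)*(b:ℝ)*∑ j : {j : Fin n // j ≠ i}, (k j.val:ℝ)*ω j.val := by
        rw [Finset.mul_sum, ← Finset.sum_sub_distrib]
        exact Finset.sum_congr rfl (fun j _ => by ring)
      have key : (T':ℝ) * ω i - (P i : ℝ)
          = ∑ j : {j : Fin n // j ≠ i}, (k j.val:ℝ) * ((p j:ℝ) - (T:ℝ)*((b:ℝ)*ω j.val)) := by
        rw [hT'cast, hPi, hsum2]
        have h2 : (T:ℝ) * (b:ℝ)^2 * ω i = (T:ℝ)*(b:ℝ)*((b:ℝ)*ω i) := by ring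
        rw [h2, hsplit, mul_sub]
        ring
      rw [key]
      have h1 : |∑ j : {j : Fin n // j ≠ i}, (k j.val:ℝ) * ((p j:ℝ) - (T:ℝ)*((b:ℝ)*ω j.val))|
          ≤ ∑ j : {j : Fin n // j ≠ i}, |(k j.val:ℝ)| * (1/(Q:ℝ)) := by
        refine le_trans (Finset.abs_sum_le_sum_abs _ _) (Finset.sum_le_sum ?_)
        intro j _
        rw [abs_mul]
        refine mul_le_mul_of_nonneg_left ?_ (abs_nonneg _)
        rw [abs_sub_comm]
        exact hpp j
      have h2 : ∑ j : {j : Fin n // j ≠ i}, |(k j.val:ℝ)| * (1/(Q:ℝ)) ≤ K * (1/(Q:ℝ)) := by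
        rw [← Finset.sum_mul]
        refine mul_le_mul_of_nonneg_right ?_ (by positivity)
        have h3 : ∑ j ∈ univ.erase i, |(k j:ℝ)| = ∑ j : {j : Fin n // j ≠ i}, |(k j.val:ℝ)| :=
          Finset.sum_subtype _ (by simp) _
        rw [← h3, hK]
        exact Finset.sum_le_sum_of_subset_of_nonneg (Finset.erase_subset _ _)
          (fun j _ _ => abs_nonneg _)
      calc |∑ j : {j : Fin n // j ≠ i}, (k j.val:ℝ) * ((p j:ℝ) - (T:ℝ)*((b:ℝ)*ω j.val))|
          ≤ K * (1/(Q:ℝ)) := le_trans h1 h2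
        _ = K / Q := by rw [mul_one_div]
    · have hPi : ((P i : ℤ) : ℝ) = (b:ℝ) * ((p ⟨i, h⟩ : ℤ):ℝ) := by
        rw [hP]
        simp only [dif_neg h]
        push_cast
        ring
      have key : (T':ℝ)*ω i - (P i : ℝ) = (b:ℝ) * ((T:ℝ)*((b:ℝ)*ω i) - (p ⟨i,h⟩ : ℤ)) := by
        rw [hT'cast, hPi]; ring
      rw [key, abs_mul]
      calc |(b:ℝ)| * |(T:ℝ)*((b:ℝ)*ω i) - ((p ⟨i,h⟩ : ℤ):ℝ)|
          ≤ |(b:ℝ)| * (1/(Q:ℝ)) := mul_le_mul_of_nonneg_left (hpp ⟨i,h⟩) (abs_nonneg _)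
        _ ≤ K * (1/(Q:ℝ)) := mul_le_mul_of_nonneg_right hbK (by positivity)
        _ = K / Q := by rw [mul_one_div]
  have hupper : distZ (fun j => (T':ℝ) * ω j) ≤ K / Q :=
    le_trans (distZ_le' _ P) (supNorm_le' hcoord)
  have hlower := hΩ T' hT'1
  have hT'R1 : (1:ℝ) ≤ (T':ℝ) := by exact_mod_cast hT'1
  have hchain : C * (T':ℝ)^(-s) ≤ K / Q := by
    have hexp : -(1 + τ) / (n:ℝ) = -s := by rw [hs]; ring
    rw [hexp] at hlower
    exact le_trans hlower hupper
  have hstep1 : C * ((b:ℝ)^2 * (Q:ℝ)^((n-1:ℕ)))^(-s) ≤ K / Q := by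
    refine le_trans (mul_le_mul_of_nonneg_left ?_ hC.le) hchain
    refine Real.rpow_le_rpow_of_nonpos (by linarith) ?_ (neg_nonpos.2 hs0)
    rw [hT'cast]
    have hTQ : (T:ℝ) ≤ (Q:ℝ)^((n-1:ℕ)) := by exact_mod_cast hTle
    calc (T:ℝ) * (b:ℝ)^2 ≤ (Q:ℝ)^((n-1:ℕ)) * (b:ℝ)^2 :=
          mul_le_mul_of_nonneg_right hTQ hb2pos.le
      _ = (b:ℝ)^2 * (Q:ℝ)^((n-1:ℕ)) := by ring
  have hQpow : ((Q:ℝ)^((n-1:ℕ)))^(-s) = (Q:ℝ) ^ (((n:ℝ)-1) * (-s)) := by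
    rw [← Real.rpow_natCast (Q:ℝ) (n-1), ← Real.rpow_mul hQR.le]
    congr 1
    rw [Nat.cast_sub (by omega : 1 ≤ n)]
    push_cast
    ring
  rw [Real.mul_rpow hb2pos.le (by positivity), hQpow, ← mul_assoc] at hstep1
  have h5 := mul_le_mul_of_nonneg_right hstep1 hQR.le
  rw [div_mul_cancel₀ _ (ne_of_gt hQR)] at h5
  have hQe : (Q:ℝ)^(((n:ℝ)-1)*(-s)) * (Q:ℝ) = (Q:ℝ)^e := by
    nth_rewrite 2 [← Real.rpow_one (Q:ℝ)]
    rw [← Real.rpow_add hQR]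
    congr 1
    rw [hedef]
    ring
  have hfin : c1 * (Q:ℝ)^e ≤ K := by
    calc c1 * (Q:ℝ)^e = C * ((b:ℝ)^2)^(-s) * ((Q:ℝ)^(((n:ℝ)-1)*(-s)) * (Q:ℝ)) := by
          rw [hc1def, hQe]
      _ = C * ((b:ℝ)^2)^(-s) * (Q:ℝ)^(((n:ℝ)-1)*(-s)) * (Q:ℝ) := by ring
      _ ≤ K := h5
  linarith
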